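/- Let B₀ = UᵀU be symmetric positive definite (U ∈ ℝ^{n×n}), P = XXᵀ with X ∈ ℝ^{n×m}, K ∈ ℝ^{n×n} symmetric positive semidefinite and singular (λₙ(K)=0), β ∈ [0,1], U_h = [√(1-β)U, √βX], and S = I_{n+m} + U_hᵀKU_h. Then κ(S) ≤ 1 + √((β-β²)λ₁(B₀)λ₁(P)λ₁(K)²) + max((1-β)λ₁(B₀)λ₁(K), βλ₁(P)λ₁(K)). -/

import Mathlib

open Matrix
open scoped Matrix.Norms.L2Operator
open scoped MatrixOrder

noncomputable def lam1 {ι : Type*} [Fintype ι] [DecidableEq ι] (A : Matrix ι ι ℝ) : ℝ :=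
  sSup (spectrum ℝ A)

noncomputable def lamn {ι : Type*} [Fintype ι] [DecidableEq ι] (A : Matrix ι ι ℝ) : ℝ :=
  sInf (spectrum ℝ A)

noncomputable def condNum {ι : Type*} [Fintype ι] [DecidableEq ι] (A : Matrix ι ι ℝ) : ℝ :=
  lam1 A / lamn A

section Helpers
variable {ι κ : Type*} [Fintype ι] [Fintype κ] [DecidableEq ι] [DecidableEq κ]

lemma euclid_norm_sq (x : EuclideanSpace ℝ ι) : ‖x‖ ^ 2 = ∑ i, x i ^ 2 := by
  rw [EuclideanSpace.norm_eq, Real.sq_sqrt (by positivity)]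
  simp [sq_abs]

lemma opNorm_le_of_mulVec (A : Matrix ι κ ℝ) {c : ℝ} (hc : 0 ≤ c)
    (h : ∀ x : EuclideanSpace ℝ κ, ‖(toEuclideanLin A) x‖ ≤ c * ‖x‖) : ‖A‖ ≤ c := by
  rw [Matrix.l2_opNorm_def]
  exact ContinuousLinearMap.opNorm_le_bound _ hc fun x => h x

lemma l2_opNorm_diagonal_le (d : ι → ℝ) {c : ℝ} (hc : 0 ≤ c)
    (hd : ∀ i, |d i| ≤ c) : ‖Matrix.diagonal d‖ ≤ c := by
  apply opNorm_le_of_mulVec _ hc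
  intro x
  have h1 : ‖(toEuclideanLin (Matrix.diagonal d)) x‖ ^ 2 ≤ (c * ‖x‖) ^ 2 := by
    rw [euclid_norm_sq, mul_pow, euclid_norm_sq, Finset.mul_sum]
    apply Finset.sum_le_sum
    intro i _
    have : (toEuclideanLin (Matrix.diagonal d)) x i = d i * x i := by
      simp [Matrix.toEuclideanLin_apply, Matrix.mulVec_diagonal]
    rw [this, mul_pow]
    have h3 : d i ^ 2 ≤ c ^ 2 := by
      rw [← sq_abs]
      exact pow_le_pow_left₀ (abs_nonneg _) (hd i) 2
    exact mul_le_mul_of_nonneg_right h3 (sq_nonneg _)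
  have h2 : (0:ℝ) ≤ c * ‖x‖ := by positivity
  nlinarith [norm_nonneg ((toEuclideanLin (Matrix.diagonal d)) x)]

end Helpers

section Blocks
variable {ι κ : Type*} [Fintype ι] [Fintype κ] [DecidableEq ι] [DecidableEq κ]

lemma block_apply_inl (A : Matrix ι ι ℝ) (B : Matrix ι κ ℝ) (C : Matrix κ ι ℝ)
    (D : Matrix κ κ ℝ) (x : EuclideanSpace ℝ (ι ⊕ κ)) (i : ι) :
    (toEuclideanLin (fromBlocks A B C D)) x (Sum.inl i) =
      (A *ᵥ (fun a => x (Sum.inl a)) + B *ᵥ (fun a => x (Sum.inr a))) i := by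
  rw [Matrix.toEuclideanLin_apply]
  have : x.ofLp =
      Sum.elim (fun a => x (Sum.inl a)) (fun a => x (Sum.inr a)) := by
    ext (a | a) <;> rfl
  rw [this, Matrix.fromBlocks_mulVec]
  rfl

lemma block_apply_inr (A : Matrix ι ι ℝ) (B : Matrix ι κ ℝ) (C : Matrix κ ι ℝ)
    (D : Matrix κ κ ℝ) (x : EuclideanSpace ℝ (ι ⊕ κ)) (j : κ) :
    (toEuclideanLin (fromBlocks A B C D)) x (Sum.inr j) =
      (C *ᵥ (fun a => x (Sum.inl a)) + D *ᵥ (fun a => x (Sum.inr a))) j := by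
  rw [Matrix.toEuclideanLin_apply]
  have : x.ofLp =
      Sum.elim (fun a => x (Sum.inl a)) (fun a => x (Sum.inr a)) := by
    ext (a | a) <;> rfl
  rw [this, Matrix.fromBlocks_mulVec]
  rfl

lemma euclid_split_sq (x : EuclideanSpace ℝ (ι ⊕ κ)) :
    ‖x‖ ^ 2 = ‖((EuclideanSpace.equiv ι ℝ).symm fun a => x (Sum.inl a) : EuclideanSpace ℝ ι)‖ ^ 2
      + ‖((EuclideanSpace.equiv κ ℝ).symm fun a => x (Sum.inr a) : EuclideanSpace ℝ κ)‖ ^ 2 := by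
  rw [euclid_norm_sq, euclid_norm_sq, euclid_norm_sq, Fintype.sum_sum_type]
  rfl

lemma sq_le_sq_imp_le {a b : ℝ} (ha : 0 ≤ a) (hb : 0 ≤ b) (h : a ^ 2 ≤ b ^ 2) : a ≤ b := by
  nlinarith

lemma l2_opNorm_fromBlocks_diag_le (A : Matrix ι ι ℝ) (D : Matrix κ κ ℝ) :
    ‖fromBlocks A (0 : Matrix ι κ ℝ) (0 : Matrix κ ι ℝ) D‖ ≤ max ‖A‖ ‖D‖ := by
  have hc : (0:ℝ) ≤ max ‖A‖ ‖D‖ := le_max_of_le_left (norm_nonneg _)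
  apply opNorm_le_of_mulVec _ hc
  intro x
  set x1 : EuclideanSpace ℝ ι := (EuclideanSpace.equiv ι ℝ).symm fun a => x (Sum.inl a) with hx1
  set x2 : EuclideanSpace ℝ κ := (EuclideanSpace.equiv κ ℝ).symm fun a => x (Sum.inr a) with hx2
  apply sq_le_sq_imp_le (norm_nonneg _) (by positivity)
  have hMx : ‖(toEuclideanLin (fromBlocks A 0 0 D)) x‖ ^ 2 =
      ‖((EuclideanSpace.equiv ι ℝ).symm (A *ᵥ x1) : EuclideanSpace ℝ ι)‖ ^ 2 +
      ‖((EuclideanSpace.equiv κ ℝ).symm (D *ᵥ x2) : EuclideanSpace ℝ κ)‖ ^ 2 := by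
    rw [euclid_norm_sq, euclid_norm_sq, euclid_norm_sq, Fintype.sum_sum_type]
    congr 1
    · apply Finset.sum_congr rfl; intro i _
      rw [block_apply_inl A 0 0 D x i]
      simp [x1]
    · apply Finset.sum_congr rfl; intro j _
      rw [block_apply_inr A 0 0 D x j]
      simp [x2]
  rw [hMx, mul_pow, euclid_split_sq x, ← hx1, ← hx2, mul_add]
  have h1 := Matrix.l2_opNorm_mulVec A x1
  have h2 := Matrix.l2_opNorm_mulVec D x2
  have b1 : ‖((EuclideanSpace.equiv ι ℝ).symm (A *ᵥ x1) : EuclideanSpace ℝ ι)‖ ^ 2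
      ≤ (max ‖A‖ ‖D‖) ^ 2 * ‖x1‖ ^ 2 := by
    rw [← mul_pow]
    apply pow_le_pow_left₀ (norm_nonneg _)
    exact h1.trans (mul_le_mul_of_nonneg_right (le_max_left _ _) (norm_nonneg _))
  have b2 : ‖((EuclideanSpace.equiv κ ℝ).symm (D *ᵥ x2) : EuclideanSpace ℝ κ)‖ ^ 2
      ≤ (max ‖A‖ ‖D‖) ^ 2 * ‖x2‖ ^ 2 := by
    rw [← mul_pow]
    apply pow_le_pow_left₀ (norm_nonneg _)
    exact h2.trans (mul_le_mul_of_nonneg_right (le_max_right _ _) (norm_nonneg _))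
  linarith

lemma l2_opNorm_fromBlocks_offDiag_le (B : Matrix ι κ ℝ) :
    ‖fromBlocks (0 : Matrix ι ι ℝ) B Bᴴ (0 : Matrix κ κ ℝ)‖ ≤ ‖B‖ := by
  apply opNorm_le_of_mulVec _ (norm_nonneg _)
  intro x
  set x1 : EuclideanSpace ℝ ι := (EuclideanSpace.equiv ι ℝ).symm fun a => x (Sum.inl a) with hx1
  set x2 : EuclideanSpace ℝ κ := (EuclideanSpace.equiv κ ℝ).symm fun a => x (Sum.inr a) with hx2
  apply sq_le_sq_imp_le (norm_nonneg _) (by positivity)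
  have hMx : ‖(toEuclideanLin (fromBlocks 0 B Bᴴ 0)) x‖ ^ 2 =
      ‖((EuclideanSpace.equiv ι ℝ).symm (B *ᵥ x2) : EuclideanSpace ℝ ι)‖ ^ 2 +
      ‖((EuclideanSpace.equiv κ ℝ).symm (Bᴴ *ᵥ x1) : EuclideanSpace ℝ κ)‖ ^ 2 := by
    rw [euclid_norm_sq, euclid_norm_sq, euclid_norm_sq, Fintype.sum_sum_type]
    congr 1
    · apply Finset.sum_congr rfl; intro i _
      rw [block_apply_inl 0 B Bᴴ 0 x i]
      simp [x2]
    · apply Finset.sum_congr rfl; intro j _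
      rw [block_apply_inr 0 B Bᴴ 0 x j]
      simp [x1]
  rw [hMx, mul_pow, euclid_split_sq x, ← hx1, ← hx2, mul_add]
  have h1 := Matrix.l2_opNorm_mulVec B x2
  have h2 := Matrix.l2_opNorm_mulVec Bᴴ x1
  rw [Matrix.l2_opNorm_conjTranspose] at h2
  have b1 : ‖((EuclideanSpace.equiv ι ℝ).symm (B *ᵥ x2) : EuclideanSpace ℝ ι)‖ ^ 2
      ≤ ‖B‖ ^ 2 * ‖x2‖ ^ 2 := by
    rw [← mul_pow]; exact pow_le_pow_left₀ (norm_nonneg _) h1 2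
  have b2 : ‖((EuclideanSpace.equiv κ ℝ).symm (Bᴴ *ᵥ x1) : EuclideanSpace ℝ κ)‖ ^ 2
      ≤ ‖B‖ ^ 2 * ‖x1‖ ^ 2 := by
    rw [← mul_pow]; exact pow_le_pow_left₀ (norm_nonneg _) h2 2
  linarith

end Blocks

section Spec
variable {ι : Type*} [Fintype ι] [DecidableEq ι]

lemma spectrum_empty_of_isEmpty [IsEmpty ι] (A : Matrix ι ι ℝ) : spectrum ℝ A = ∅ := by
  ext μ
  simp only [Set.mem_empty_iff_false, iff_false, spectrum.mem_iff, not_not]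
  exact isUnit_of_subsingleton _

lemma lam1_le_norm (A : Matrix ι ι ℝ) : lam1 A ≤ ‖A‖ := by
  rcases isEmpty_or_nonempty ι with h | h
  · rw [lam1, spectrum_empty_of_isEmpty, Real.sSup_empty]
    exact norm_nonneg _
  · have : Nontrivial (Matrix ι ι ℝ) := inferInstanceAs (Nontrivial (ι → ι → ℝ))
    rcases Set.eq_empty_or_nonempty (spectrum ℝ A) with hs | hs
    · rw [lam1, hs, Real.sSup_empty]; exact norm_nonneg _
    · exact csSup_le hs fun μ hμ =>
        (le_abs_self μ).trans (spectrum.norm_le_norm_of_mem hμ)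

lemma lam1_nonneg_of_psd {A : Matrix ι ι ℝ} (hA : A.PosSemidef) : 0 ≤ lam1 A := by
  rcases isEmpty_or_nonempty ι with h | h
  · rw [lam1, spectrum_empty_of_isEmpty, Real.sSup_empty]
  · obtain ⟨i⟩ := h
    have hmem : hA.1.eigenvalues i ∈ spectrum ℝ A := by
      rw [hA.1.spectrum_real_eq_range_eigenvalues]; exact Set.mem_range_self i
    exact (hA.eigenvalues_nonneg i).trans (le_csSup (Matrix.finite_real_spectrum (A := A)).bddAbove hmem)

lemma mem_le_lam1 {A : Matrix ι ι ℝ} {μ : ℝ} (h : μ ∈ spectrum ℝ A) : μ ≤ lam1 A :=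
  le_csSup (Matrix.finite_real_spectrum (A := A)).bddAbove h

lemma norm_le_lam1_of_psd {A : Matrix ι ι ℝ} (hA : A.PosSemidef) : ‖A‖ ≤ lam1 A := by
  rcases isEmpty_or_nonempty ι with h | h
  · have : Subsingleton (Matrix ι ι ℝ) := inferInstanceAs (Subsingleton (ι → ι → ℝ))
    have h0 : A = 0 := Subsingleton.elim _ _
    rw [h0, norm_zero, lam1, spectrum_empty_of_isEmpty, Real.sSup_empty]
  · have : Nontrivial (Matrix ι ι ℝ) := inferInstanceAs (Nontrivial (ι → ι → ℝ))
    have hd : ‖(Matrix.diagonal (RCLike.ofReal ∘ hA.1.eigenvalues) : Matrix ι ι ℝ)‖ ≤ lam1 A := by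
      rw [RCLike.ofReal_real_eq_id, Function.id_comp]
      apply l2_opNorm_diagonal_le _ (lam1_nonneg_of_psd hA)
      intro i
      have hmem : hA.1.eigenvalues i ∈ spectrum ℝ A := by
        rw [hA.1.spectrum_real_eq_range_eigenvalues]; exact Set.mem_range_self i
      rw [abs_of_nonneg (hA.eigenvalues_nonneg i)]
      exact mem_le_lam1 hmem
    calc ‖A‖ = ‖(hA.1.eigenvectorUnitary : Matrix ι ι ℝ) *
          Matrix.diagonal (RCLike.ofReal ∘ hA.1.eigenvalues) *
          (star (hA.1.eigenvectorUnitary : Matrix ι ι ℝ))‖ := by rw [← Unitary.conjStarAlgAut_apply (S := ℝ), ← hA.1.spectral_theorem]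
      _ ≤ ‖(hA.1.eigenvectorUnitary : Matrix ι ι ℝ) *
          Matrix.diagonal (RCLike.ofReal ∘ hA.1.eigenvalues)‖ *
          ‖(star (hA.1.eigenvectorUnitary : Matrix ι ι ℝ))‖ := norm_mul_le _ _
      _ ≤ ‖(hA.1.eigenvectorUnitary : Matrix ι ι ℝ)‖ *
          ‖(Matrix.diagonal (RCLike.ofReal ∘ hA.1.eigenvalues) : Matrix ι ι ℝ)‖ *
          ‖(star (hA.1.eigenvectorUnitary : Matrix ι ι ℝ))‖ :=
            mul_le_mul_of_nonneg_right (norm_mul_le _ _) (norm_nonneg _)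
      _ ≤ lam1 A := by
          rw [CStarRing.norm_of_mem_unitary (Unitary.star_mem (hA.1.eigenvectorUnitary).2),
            CStarRing.norm_coe_unitary (hA.1.eigenvectorUnitary)]
          simpa using hd

lemma spectrum_one_add (M : Matrix ι ι ℝ) :
    spectrum ℝ (1 + M) = (fun x : ℝ => 1 + x) '' spectrum ℝ M := by
  have key : ∀ μ : ℝ, algebraMap ℝ (Matrix ι ι ℝ) μ - (1 + M)
      = algebraMap ℝ (Matrix ι ι ℝ) (μ - 1) - M := by
    intro μ
    rw [map_sub, _root_.map_one]
    abel
  ext μ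
  rw [Set.mem_image, spectrum.mem_iff, key]
  constructor
  · exact fun h => ⟨μ - 1, spectrum.mem_iff.mpr h, by ring⟩
  · rintro ⟨x, hx, rfl⟩
    have : 1 + x - 1 = x := by ring
    rw [this]
    exact spectrum.mem_iff.mp hx

lemma sSup_one_add_image {s : Set ℝ} (hne : s.Nonempty) (hf : s.Finite) :
    sSup ((fun x : ℝ => 1 + x) '' s) = 1 + sSup s := by
  apply le_antisymm
  · apply csSup_le (hne.image _)
    rintro y ⟨x, hx, rfl⟩
    simpa using le_csSup hf.bddAbove hx
  · exact le_csSup (hf.image _).bddAbove ⟨sSup s, hne.csSup_mem hf, rfl⟩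

lemma sInf_one_add_image {s : Set ℝ} (hne : s.Nonempty) (hf : s.Finite) :
    sInf ((fun x : ℝ => 1 + x) '' s) = 1 + sInf s := by
  apply le_antisymm
  · exact csInf_le (hf.image _).bddBelow ⟨sInf s, hne.csInf_mem hf, rfl⟩
  · apply le_csInf (hne.image _)
    rintro y ⟨x, hx, rfl⟩
    simpa using csInf_le hf.bddBelow hx

end Spec

theorem stmt_15 {n m : ℕ} (hm : 0 < m) (U K : Matrix (Fin n) (Fin n) ℝ)
    (X : Matrix (Fin n) (Fin m) ℝ) (B₀ P : Matrix (Fin n) (Fin n) ℝ)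
    (hB₀def : B₀ = Uᵀ * U) (hB₀ : B₀.PosDef) (hPdef : P = X * Xᵀ)
    (hK : K.PosSemidef) (hKsing : lamn K = 0)
    (β : ℝ) (hβ0 : 0 ≤ β) (hβ1 : β ≤ 1) :
    condNum (1 + (fromCols (Real.sqrt (1 - β) • U) (Real.sqrt β • X))ᵀ * K *
          fromCols (Real.sqrt (1 - β) • U) (Real.sqrt β • X))
      ≤ 1 + Real.sqrt ((β - β ^ 2) * lam1 B₀ * lam1 P * (lam1 K) ^ 2) +
          max ((1 - β) * lam1 B₀ * lam1 K) (β * lam1 P * lam1 K) := by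
  have h1β : (0:ℝ) ≤ 1 - β := by linarith
  have hm' : Nonempty (Fin n ⊕ Fin m) := ⟨Sum.inr ⟨0, hm⟩⟩
  set a := Real.sqrt (1 - β) with ha
  set b := Real.sqrt β with hb
  have ha0 : 0 ≤ a := Real.sqrt_nonneg _
  have hb0' : 0 ≤ b := Real.sqrt_nonneg _
  set V : Matrix (Fin n) (Fin n ⊕ Fin m) ℝ := fromCols (a • U) (b • X) with hV
  set M : Matrix (Fin n ⊕ Fin m) (Fin n ⊕ Fin m) ℝ := Vᵀ * K * V with hMdef
  have hVH : Vᴴ = Vᵀ := Matrix.conjTranspose_eq_transpose_of_trivial _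
  have hMpsd : M.PosSemidef := by
    rw [hMdef, ← hVH]
    exact hK.conjTranspose_mul_mul_same V
  have hspecM : spectrum ℝ M = Set.range hMpsd.1.eigenvalues :=
    hMpsd.1.spectrum_real_eq_range_eigenvalues
  have hne : (spectrum ℝ M).Nonempty := by
    rw [hspecM]; exact Set.range_nonempty _
  have hfin : (spectrum ℝ M).Finite := Matrix.finite_real_spectrum (A := M)
  -- M is singular
  have hnotunit : ¬ IsUnit M := by
    intro hu
    have hr := Matrix.rank_of_isUnit M hu
    have hfact : M = (CFC.sqrt K * V)ᴴ * (CFC.sqrt K * V) := by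
      rw [Matrix.conjTranspose_mul, (CFC.sqrt_nonneg K).posSemidef.1, hVH, hMdef]
      rw [Matrix.mul_assoc Vᵀ (CFC.sqrt K), ← Matrix.mul_assoc (CFC.sqrt K) (CFC.sqrt K), CFC.sqrt_mul_sqrt_self K hK.nonneg]
      rw [Matrix.mul_assoc]
    have h2 : M.rank ≤ n := by
      calc M.rank = (CFC.sqrt K * V).rank := by rw [hfact, Matrix.rank_conjTranspose_mul_self]
        _ ≤ Fintype.card (Fin n) := Matrix.rank_le_card_height _
        _ = n := Fintype.card_fin n
    rw [hr, Fintype.card_sum, Fintype.card_fin, Fintype.card_fin] at h2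
    omega
  have h0mem : (0:ℝ) ∈ spectrum ℝ M := spectrum.zero_mem (R := ℝ) hnotunit
  have hlamnM : lamn M = 0 := by
    apply le_antisymm (csInf_le hfin.bddBelow h0mem)
    apply le_csInf hne
    intro μ hμ
    rw [hspecM] at hμ
    obtain ⟨i, rfl⟩ := hμ
    exact hMpsd.eigenvalues_nonneg i
  have hcond : condNum (1 + M) = 1 + lam1 M := by
    rw [condNum, lam1, lamn, spectrum_one_add, sSup_one_add_image hne hfin,
      sInf_one_add_image hne hfin]
    rw [show sInf (spectrum ℝ M) = lamn M from rfl, hlamnM, add_zero, div_one]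
    rfl
  rw [hcond]
  -- psd facts and norm bounds
  have hB0psd : B₀.PosSemidef := by
    rw [hB₀def, ← Matrix.conjTranspose_eq_transpose_of_trivial U]
    exact Matrix.posSemidef_conjTranspose_mul_self U
  have hPpsd : P.PosSemidef := by
    rw [hPdef, ← Matrix.conjTranspose_eq_transpose_of_trivial X]
    exact Matrix.posSemidef_self_mul_conjTranspose X
  have hb0 : 0 ≤ lam1 B₀ := lam1_nonneg_of_psd hB0psd
  have hp : 0 ≤ lam1 P := lam1_nonneg_of_psd hPpsd
  have hk : 0 ≤ lam1 K := lam1_nonneg_of_psd hK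
  have hUt : ‖Uᵀ‖ = ‖U‖ := by
    rw [← Matrix.conjTranspose_eq_transpose_of_trivial U, Matrix.l2_opNorm_conjTranspose]
  have hXt : ‖Xᵀ‖ = ‖X‖ := by
    rw [← Matrix.conjTranspose_eq_transpose_of_trivial X, Matrix.l2_opNorm_conjTranspose]
  have hUn : ‖U‖ * ‖U‖ ≤ lam1 B₀ := by
    have h := Matrix.l2_opNorm_conjTranspose_mul_self U
    rw [Matrix.conjTranspose_eq_transpose_of_trivial] at h
    rw [← h, ← hB₀def]
    exact norm_le_lam1_of_psd hB0psd
  have hXn : ‖X‖ * ‖X‖ ≤ lam1 P := by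
    have h := Matrix.l2_opNorm_conjTranspose_mul_self Xᵀ
    have h1 : (Xᵀ)ᴴ = X := by
      rw [Matrix.conjTranspose_eq_transpose_of_trivial, Matrix.transpose_transpose]
    rw [h1, hXt] at h
    rw [← h, ← hPdef]
    exact norm_le_lam1_of_psd hPpsd
  have hKn : ‖K‖ ≤ lam1 K := norm_le_lam1_of_psd hK
  have hKsym : Kᵀ = K := by
    rw [← Matrix.conjTranspose_eq_transpose_of_trivial K]; exact hK.1
  -- block decomposition
  have hsmul : ∀ (s t : ℝ) (A : Matrix (Fin n) (Fin n) ℝ) (B : Matrix (Fin n) (Fin n) ℝ),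
      (s • A)ᵀ * K * (t • B) = (s * t) • (Aᵀ * K * B) := by
    intro s t A B
    rw [Matrix.transpose_smul, Matrix.smul_mul, Matrix.smul_mul, Matrix.mul_smul, smul_smul]
  have hsmul2 : ∀ (s t : ℝ) (A : Matrix (Fin n) (Fin n) ℝ) (B : Matrix (Fin n) (Fin m) ℝ),
      (s • A)ᵀ * K * (t • B) = (s * t) • (Aᵀ * K * B) := by
    intro s t A B
    rw [Matrix.transpose_smul, Matrix.smul_mul, Matrix.smul_mul, Matrix.mul_smul, smul_smul]
  have hsmul3 : ∀ (s t : ℝ) (A : Matrix (Fin n) (Fin m) ℝ) (B : Matrix (Fin n) (Fin n) ℝ),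
      (s • A)ᵀ * K * (t • B) = (s * t) • (Aᵀ * K * B) := by
    intro s t A B
    rw [Matrix.transpose_smul, Matrix.smul_mul, Matrix.smul_mul, Matrix.mul_smul, smul_smul]
  have hsmul4 : ∀ (s t : ℝ) (A : Matrix (Fin n) (Fin m) ℝ) (B : Matrix (Fin n) (Fin m) ℝ),
      (s • A)ᵀ * K * (t • B) = (s * t) • (Aᵀ * K * B) := by
    intro s t A B
    rw [Matrix.transpose_smul, Matrix.smul_mul, Matrix.smul_mul, Matrix.mul_smul, smul_smul]
  have hMblocks : M = fromBlocks ((1 - β) • (Uᵀ * K * U)) ((a * b) • (Uᵀ * K * X))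
      ((a * b) • (Xᵀ * K * U)) (β • (Xᵀ * K * X)) := by
    rw [hMdef, hV, Matrix.transpose_fromCols, Matrix.fromRows_mul,
      Matrix.fromRows_mul_fromCols, hsmul, hsmul2, hsmul3, hsmul4]
    rw [Real.mul_self_sqrt h1β, Real.mul_self_sqrt hβ0, mul_comm b a]
  set Dg : Matrix (Fin n ⊕ Fin m) (Fin n ⊕ Fin m) ℝ :=
    fromBlocks ((1 - β) • (Uᵀ * K * U)) 0 0 (β • (Xᵀ * K * X)) with hDg
  set C := (a * b) • (Uᵀ * K * X) with hC
  set Od : Matrix (Fin n ⊕ Fin m) (Fin n ⊕ Fin m) ℝ := fromBlocks 0 C Cᴴ 0 with hOd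
  have hCH : Cᴴ = (a * b) • (Xᵀ * K * U) := by
    rw [hC, Matrix.conjTranspose_eq_transpose_of_trivial, Matrix.transpose_smul,
      Matrix.transpose_mul, Matrix.transpose_mul, Matrix.transpose_transpose, hKsym,
      Matrix.mul_assoc]
  have hsplit : M = Dg + Od := by
    rw [hMblocks, hDg, hOd, hCH, Matrix.fromBlocks_add]
    simp
  -- norm bounds
  have hDgbound : ‖Dg‖ ≤ max ((1 - β) * lam1 B₀ * lam1 K) (β * lam1 P * lam1 K) := by
    refine (l2_opNorm_fromBlocks_diag_le _ _).trans (max_le_max ?_ ?_)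
    · rw [norm_smul, Real.norm_eq_abs, abs_of_nonneg h1β]
      have hinner : ‖Uᵀ * K * U‖ ≤ lam1 B₀ * lam1 K := by
        calc ‖Uᵀ * K * U‖ ≤ ‖Uᵀ * K‖ * ‖U‖ := Matrix.l2_opNorm_mul _ _
          _ ≤ ‖Uᵀ‖ * ‖K‖ * ‖U‖ :=
            mul_le_mul_of_nonneg_right (Matrix.l2_opNorm_mul _ _) (norm_nonneg _)
          _ = ‖U‖ * ‖U‖ * ‖K‖ := by rw [hUt]; ring
          _ ≤ lam1 B₀ * lam1 K := mul_le_mul hUn hKn (norm_nonneg _) hb0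
      calc (1 - β) * ‖Uᵀ * K * U‖ ≤ (1 - β) * (lam1 B₀ * lam1 K) :=
            mul_le_mul_of_nonneg_left hinner h1β
        _ = (1 - β) * lam1 B₀ * lam1 K := by ring
    · rw [norm_smul, Real.norm_eq_abs, abs_of_nonneg hβ0]
      have hinner : ‖Xᵀ * K * X‖ ≤ lam1 P * lam1 K := by
        calc ‖Xᵀ * K * X‖ ≤ ‖Xᵀ * K‖ * ‖X‖ := Matrix.l2_opNorm_mul _ _
          _ ≤ ‖Xᵀ‖ * ‖K‖ * ‖X‖ :=
            mul_le_mul_of_nonneg_right (Matrix.l2_opNorm_mul _ _) (norm_nonneg _)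
          _ = ‖X‖ * ‖X‖ * ‖K‖ := by rw [hXt]; ring
          _ ≤ lam1 P * lam1 K := mul_le_mul hXn hKn (norm_nonneg _) hp
      calc β * ‖Xᵀ * K * X‖ ≤ β * (lam1 P * lam1 K) :=
            mul_le_mul_of_nonneg_left hinner hβ0
        _ = β * lam1 P * lam1 K := by ring
  have hsqrtb0 : ‖U‖ ≤ Real.sqrt (lam1 B₀) := by
    rw [← Real.sqrt_mul_self (norm_nonneg U)]
    exact Real.sqrt_le_sqrt hUn
  have hsqrtp : ‖X‖ ≤ Real.sqrt (lam1 P) := by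
    rw [← Real.sqrt_mul_self (norm_nonneg X)]
    exact Real.sqrt_le_sqrt hXn
  have hOdbound : ‖Od‖ ≤ Real.sqrt ((β - β ^ 2) * lam1 B₀ * lam1 P * (lam1 K) ^ 2) := by
    have hsqrteq : Real.sqrt ((β - β ^ 2) * lam1 B₀ * lam1 P * (lam1 K) ^ 2)
        = a * (b * (Real.sqrt (lam1 B₀) * (Real.sqrt (lam1 P) * lam1 K))) := by
      rw [show (β - β ^ 2) * lam1 B₀ * lam1 P * (lam1 K) ^ 2
          = (1 - β) * (β * (lam1 B₀ * ((lam1 K) ^ 2 * lam1 P))) by ring,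
        Real.sqrt_mul h1β, Real.sqrt_mul hβ0, Real.sqrt_mul hb0,
        Real.sqrt_mul (sq_nonneg _), Real.sqrt_sq hk]
      ring_nf
      rw [ha, hb]; ring
    rw [hsqrteq]
    refine (l2_opNorm_fromBlocks_offDiag_le C).trans ?_
    rw [hC, norm_smul, Real.norm_eq_abs, abs_of_nonneg (mul_nonneg ha0 hb0'), mul_assoc a b]
    apply mul_le_mul_of_nonneg_left ?_ ha0
    apply mul_le_mul_of_nonneg_left ?_ hb0'
    calc ‖Uᵀ * K * X‖ ≤ ‖Uᵀ * K‖ * ‖X‖ := Matrix.l2_opNorm_mul _ _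
      _ ≤ ‖Uᵀ‖ * ‖K‖ * ‖X‖ :=
        mul_le_mul_of_nonneg_right (Matrix.l2_opNorm_mul _ _) (norm_nonneg _)
      _ = ‖U‖ * (‖X‖ * ‖K‖) := by rw [hUt]; ring
      _ ≤ Real.sqrt (lam1 B₀) * (Real.sqrt (lam1 P) * lam1 K) := by
        apply mul_le_mul hsqrtb0 ?_ (by positivity) (Real.sqrt_nonneg _)
        exact mul_le_mul hsqrtp hKn (norm_nonneg _) (Real.sqrt_nonneg _)
  have hlamM : lam1 M ≤ Real.sqrt ((β - β ^ 2) * lam1 B₀ * lam1 P * (lam1 K) ^ 2)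
      + max ((1 - β) * lam1 B₀ * lam1 K) (β * lam1 P * lam1 K) := by
    have h1 : lam1 M ≤ ‖M‖ := lam1_le_norm M
    have h2 : ‖M‖ ≤ ‖Dg‖ + ‖Od‖ := by rw [hsplit]; exact norm_add_le _ _
    linarith
  linarith
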